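/- Let a ∈ ℝ, let p, r be positive real numbers and q ∈ ℂ with p·r − |q|² = 1, and let P = [[p, q], [conj(q), r]] (a positive Hermitian 2×2 complex matrix of determinant 1). Set A₁ = diag(a, −a) and B = P⁻¹ · A₁ · P. If δ ≥ 0 and every entry of B·B† − B†·B has absolute value at most δ (where B† denotes the conjugate transpose), then every entry of B − A₁ has absolute value at most √(2δ). -/

import Mathlib

open Matrix

private lemma aux_real_bounds (a p r k δ : ℝ) (hp : 0 < p) (hr : 0 < r) (hk0 : 0 ≤ k)
    (hδ : 0 ≤ δ) (hpr : p * r = 1 + k^2)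
    (h1 : |4*a^2*k^2*(r^2-p^2)| ≤ δ)
    (h2 : 4*a^2*(1+2*k^2)*(p+r) * k ≤ δ) :
    (2*a*k^2)^2 ≤ 2*δ ∧ (2*a*r)^2 * k^2 ≤ 2*δ ∧ (2*a*p)^2 * k^2 ≤ 2*δ := by
  have hsum : 2*k ≤ p + r := by nlinarith [sq_nonneg (p-r), hp, hr, hk0]
  have hsum2 : 2 ≤ p + r := by nlinarith [sq_nonneg (p-r), sq_nonneg k]
  have hkey : k^2*(1+k^2) ≤ (1+2*k^2)*(p+r)*k := by
    nlinarith [mul_nonneg (by linarith : (0:ℝ) ≤ p+r-2*k) hk0,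
      mul_nonneg (by linarith : (0:ℝ) ≤ p+r-2*k) (pow_nonneg hk0 3)]
  have hintkey : 4*a^2*(k^2*(1+k^2)) ≤ 4*a^2*((1+2*k^2)*(p+r)*k) :=
    mul_le_mul_of_nonneg_left hkey (by positivity)
  refine ⟨?_, ?_, ?_⟩
  · nlinarith [h2, sq_nonneg (a*k), sq_nonneg (a*k^2),
      mul_nonneg (mul_nonneg (mul_nonneg (sq_nonneg a) hk0)
        (by positivity : (0:ℝ) ≤ 1+2*k^2)) (by linarith : (0:ℝ) ≤ p+r-2*k)]
  · rcases le_total p r with hc | hc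
    · have h1a : 4*a^2*k^2*(r^2-p^2) ≤ δ := (le_abs_self _).trans h1
      have hp2 : p^2 ≤ 1 + k^2 := by nlinarith
      have hint2 : 4*a^2*k^2*p^2 ≤ 4*a^2*k^2*(1+k^2) :=
        mul_le_mul_of_nonneg_left hp2 (by positivity)
      linarith [h1a, h2, hintkey, hint2]
    · have hr2 : r^2 ≤ 1 + k^2 := by nlinarith
      have hint2 : 4*a^2*k^2*r^2 ≤ 4*a^2*k^2*(1+k^2) :=
        mul_le_mul_of_nonneg_left hr2 (by positivity)
      linarith [h2, hintkey, hint2, hδ]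
  · rcases le_total r p with hc | hc
    · have h1b : 4*a^2*k^2*(p^2-r^2) ≤ δ := by
        have := (neg_le_abs (4*a^2*k^2*(r^2-p^2))).trans h1
        linarith
      have hr2 : r^2 ≤ 1 + k^2 := by nlinarith
      have hint2 : 4*a^2*k^2*r^2 ≤ 4*a^2*k^2*(1+k^2) :=
        mul_le_mul_of_nonneg_left hr2 (by positivity)
      linarith [h1b, h2, hintkey, hint2]
    · have hp2 : p^2 ≤ 1 + k^2 := by nlinarith
      have hint2 : 4*a^2*k^2*p^2 ≤ 4*a^2*k^2*(1+k^2) :=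
        mul_le_mul_of_nonneg_left hp2 (by positivity)
      linarith [h2, hintkey, hint2, hδ]

/-- Lemma 4.21 (matrix core): if `P` is a positive Hermitian matrix of determinant one,
`A₁ = diag(a, -a)`, `B = P⁻¹ A₁ P`, and all entries of `B Bᴴ - Bᴴ B` are of size at
most `δ`, then all entries of `B - A₁` are of size at most `√(2δ)`. -/
theorem entry_bound_of_commutator_small (a p r : ℝ) (q : ℂ) (hp : 0 < p) (hr : 0 < r)
    (hdet : p * r - ‖q‖ ^ 2 = 1) (δ : ℝ) (hδ : 0 ≤ δ)
    (P A₁ B : Matrix (Fin 2) (Fin 2) ℂ)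
    (hP : P = !![(p : ℂ), q; (starRingEnd ℂ) q, (r : ℂ)])
    (hA₁ : A₁ = !![(a : ℂ), 0; 0, -(a : ℂ)])
    (hB : B = P⁻¹ * A₁ * P)
    (hsmall : ∀ i j, ‖(B * Bᴴ - Bᴴ * B) i j‖ ≤ δ) :
    ∀ i j, ‖(B - A₁) i j‖ ≤ Real.sqrt (2 * δ) := by
  obtain ⟨k, hk, hk0⟩ : ∃ k : ℝ, ‖q‖ = k ∧ 0 ≤ k :=
    ⟨‖q‖, rfl, norm_nonneg q⟩
  rw [hk] at hdet
  have hqc : q * (starRingEnd ℂ) q = ((k:ℝ):ℂ)^2 := by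
    rw [Complex.mul_conj]; push_cast [Complex.normSq_eq_norm_sq, hk]; ring
  have hdetC : (p:ℂ) * (r:ℂ) = 1 + ((k:ℝ):ℂ)^2 := by norm_cast; linarith
  have hpr : p * r = 1 + k^2 := by linarith
  -- explicit form of B
  have hPinv : P⁻¹ = !![(r:ℂ), -q; -(starRingEnd ℂ) q, (p:ℂ)] := by
    apply Matrix.inv_eq_left_inv
    rw [hP]
    ext i j
    fin_cases i <;> fin_cases j <;>
      simp [Matrix.mul_apply, Fin.sum_univ_two]
    · linear_combination hdetC + mul_comm q ((starRingEnd ℂ) q) - hqc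
    · ring
    · ring
    · linear_combination hdetC - hqc
  have hBex : B = !![(a:ℂ)*((p:ℂ)*(r:ℂ)) + (a:ℂ)*((k:ℝ):ℂ)^2, 2*(a:ℂ)*(r:ℂ)*q;
      -2*(a:ℂ)*(p:ℂ)*(starRingEnd ℂ) q, -((a:ℂ)*((p:ℂ)*(r:ℂ))) - (a:ℂ)*((k:ℝ):ℂ)^2] := by
    rw [hB, hPinv, hA₁, hP]
    ext i j
    fin_cases i <;> fin_cases j <;>
      simp [Matrix.mul_apply, Fin.sum_univ_two]
    · linear_combination (a:ℂ) * hqc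
    · ring
    · ring
    · linear_combination -(a:ℂ) * hqc
  have hBH : Bᴴ = !![(a:ℂ)*((p:ℂ)*(r:ℂ)) + (a:ℂ)*((k:ℝ):ℂ)^2, -2*(a:ℂ)*(p:ℂ)*q;
      2*(a:ℂ)*(r:ℂ)*(starRingEnd ℂ) q, -((a:ℂ)*((p:ℂ)*(r:ℂ))) - (a:ℂ)*((k:ℝ):ℂ)^2] := by
    rw [hBex]
    ext i j
    fin_cases i <;> fin_cases j <;>
      simp [Matrix.conjTranspose_apply, map_add, _root_.map_mul, map_neg, map_pow,
        Complex.conj_ofReal, Complex.conj_conj]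
  -- commutator entries
  have hC00 : (B * Bᴴ - Bᴴ * B) 0 0 = ((4*a^2*k^2*(r^2-p^2) : ℝ) : ℂ) := by
    rw [Matrix.sub_apply, hBH, hBex]
    simp [Matrix.mul_apply, Fin.sum_univ_two]
    linear_combination ((4*(a:ℂ)^2*(r:ℂ)^2 - 4*(a:ℂ)^2*(p:ℂ)^2)) * hqc
  have hC01 : (B * Bᴴ - Bᴴ * B) 0 1 = ((-(4*a^2*(1+2*k^2)*(p+r)) : ℝ) : ℂ) * q := by
    rw [Matrix.sub_apply, hBH, hBex]
    simp [Matrix.mul_apply, Fin.sum_univ_two]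
    linear_combination (-4*(a:ℂ)^2*(p:ℂ)*q - 4*(a:ℂ)^2*(r:ℂ)*q) * hdetC
  -- entries of B - A₁
  have hD00 : (B - A₁) 0 0 = ((2*a*k^2 : ℝ) : ℂ) := by
    rw [Matrix.sub_apply, hBex, hA₁]
    simp
    linear_combination (a:ℂ) * hdetC
  have hD01 : (B - A₁) 0 1 = ((2*a*r : ℝ) : ℂ) * q := by
    rw [Matrix.sub_apply, hBex, hA₁]
    simp
  have hD10 : (B - A₁) 1 0 = ((-(2*a*p) : ℝ) : ℂ) * (starRingEnd ℂ) q := by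
    rw [Matrix.sub_apply, hBex, hA₁]
    simp
  have hD11 : (B - A₁) 1 1 = ((-(2*a*k^2) : ℝ) : ℂ) := by
    rw [Matrix.sub_apply, hBex, hA₁]
    simp
    linear_combination -(a:ℂ) * hdetC
  -- real inequalities from hsmall
  have h1 : |4*a^2*k^2*(r^2-p^2)| ≤ δ := by
    have := hsmall 0 0
    rwa [hC00, Complex.norm_real, Real.norm_eq_abs] at this
  have h2 : 4*a^2*(1+2*k^2)*(p+r) * k ≤ δ := by
    have := hsmall 0 1
    rw [hC01, norm_mul, Complex.norm_real, Real.norm_eq_abs, hk, abs_neg,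
      abs_of_nonneg (by positivity : (0:ℝ) ≤ 4*a^2*(1+2*k^2)*(p+r))] at this
    exact this
  obtain ⟨kb1, kb2, kb3⟩ := aux_real_bounds a p r k δ hp hr hk0 hδ hpr h1 h2
  -- conclusion
  intro i j
  fin_cases i <;> fin_cases j
  · show ‖(B - A₁) 0 0‖ ≤ Real.sqrt (2*δ)
    rw [hD00, Complex.norm_real, Real.norm_eq_abs]
    apply Real.le_sqrt_of_sq_le
    rw [sq_abs]; exact kb1
  · show ‖(B - A₁) 0 1‖ ≤ Real.sqrt (2*δ)
    rw [hD01, norm_mul, Complex.norm_real, Real.norm_eq_abs, hk]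
    apply Real.le_sqrt_of_sq_le
    rw [mul_pow, sq_abs]; exact kb2
  · show ‖(B - A₁) 1 0‖ ≤ Real.sqrt (2*δ)
    rw [hD10, norm_mul, Complex.norm_real, Real.norm_eq_abs, Complex.norm_conj, hk, abs_neg]
    apply Real.le_sqrt_of_sq_le
    rw [mul_pow, sq_abs]; exact kb3
  · show ‖(B - A₁) 1 1‖ ≤ Real.sqrt (2*δ)
    rw [hD11, Complex.norm_real, Real.norm_eq_abs, abs_neg]
    apply Real.le_sqrt_of_sq_le
    rw [sq_abs]; exact kb1
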